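/- In a semigraph algebra, the range projections of any two half-standard words commute: if a = xp and b = yq with x, y ∈ 𝒯₁ and p, q ∈ 𝒫, then (aa*)(bb*) = (bb*)(aa*). -/

import Mathlib

/-- The set of minimal common extensions `𝒯₁^{(min)}(x,y)` of `x` and `y`:
pairs `(α,β)` in `𝒯₁` with `xα = yβ ≠ 0` of degree `d(x) ⊔ d(y)`. -/
def mceSet {k X : Type*} [Ring X] (T1 : Set X) (deg : X → (k →₀ ℕ))
    (x y : X) : Set (X × X) :=
  {ab | ab.1 ∈ T1 ∧ ab.2 ∈ T1 ∧ x * ab.1 ≠ 0 ∧ x * ab.1 = y * ab.2 ∧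
    deg (x * ab.1) = deg x ⊔ deg y}

/-- A `k`-semigraph algebra (Definition `DefSemigraphAlgebra`): a `*`-algebra
generated by a commuting multiplicatively closed set `𝒫` of projections and a
set `𝒯` of nonzero partial isometries forming a non-unital finitely aligned
`k`-semigraph (with unitization `𝒯₁ = 𝒯 ∪ {1}`), subject to the commutation
relations `p x = x q`, the expansion of `x* y` over minimal common extensions,
and carrying a gauge action (equivalently, it is the quotient of the free
`*`-algebra by a subset of the fiber space). -/
structure SemigraphAlgebra (k : Type*) (X : Type*) [Ring X] [StarRing X]
    [Algebra ℂ X] where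
  P : Set X
  T : Set X
  deg : X → (k →₀ ℕ)
  P_isProj : ∀ p ∈ P, p * p = p ∧ star p = p
  P_comm : ∀ p ∈ P, ∀ q ∈ P, p * q = q * p
  P_mulClosed : ∀ p ∈ P, ∀ q ∈ P, p * q ∈ P
  disjoint : ∀ t ∈ T, t ∉ P
  T_ne_zero : ∀ t ∈ T, t ≠ 0
  T_pisom : ∀ t ∈ T, t * star t * t = t
  T_mulClosed : ∀ s ∈ T, ∀ t ∈ T, s * t ≠ 0 → s * t ∈ T
  one_notMem : (1 : X) ∉ T
  deg_one : deg 1 = 0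
  deg_pos : ∀ t ∈ T, deg t ≠ 0
  deg_mul : ∀ s ∈ T, ∀ t ∈ T, s * t ≠ 0 → deg (s * t) = deg s + deg t
  ufp : ∀ x ∈ T, ∀ n₁ n₂ : k →₀ ℕ, deg x = n₁ + n₂ →
    ∃! ab : X × X, ab.1 ∈ insert (1:X) T ∧ ab.2 ∈ insert (1:X) T ∧
      x = ab.1 * ab.2 ∧ deg ab.1 = n₁ ∧ deg ab.2 = n₂
  finitelyAligned : ∀ x ∈ insert (1:X) T, ∀ y ∈ insert (1:X) T,
    (mceSet (insert (1:X) T) deg x y).Finite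
  P_commute_T : ∀ x ∈ T, ∀ p ∈ P, ∃ q ∈ P, p * x = x * q
  expansion : ∀ x (hx : x ∈ T), ∀ y (hy : y ∈ T), ∃ q : X × X → X,
    (∀ ab ∈ mceSet (insert (1:X) T) deg x y, q ab ∈ P) ∧
    star x * y =
      ∑ ab ∈ (finitelyAligned x (Set.mem_insert_of_mem _ hx)
          y (Set.mem_insert_of_mem _ hy)).toFinset,
        ab.1 * q ab * star ab.2
  gauge : ∀ lam : k → ℂ, (∀ i, ‖lam i‖ = 1) →
    ∃ σ : X ≃ₐ[ℂ] X, (∀ p ∈ P, σ p = p) ∧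
      ∀ t ∈ T, σ t = (∏ i ∈ (deg t).support, lam i ^ (deg t i)) • t

namespace SemigraphAlgebra

variable {k X : Type*} [Ring X] [StarRing X] [Algebra ℂ X]

/-- `𝒯₁`, the unitization of the semigraph `𝒯`. -/
def T1 (A : SemigraphAlgebra k X) : Set X := insert 1 A.T

end SemigraphAlgebra

/-- In a semigraph algebra, the range projections of any two half-standard
words `a = xp`, `b = yq` (`x, y ∈ 𝒯₁`, `p, q ∈ 𝒫`) commute. -/
theorem SemigraphAlgebra.halfStandard_range_proj_comm
    {k X : Type*} [Ring X] [StarRing X] [Algebra ℂ X]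
    (A : SemigraphAlgebra k X) (x y p q : X)
    (hx : x ∈ A.T1) (hy : y ∈ A.T1) (hp : p ∈ A.P) (hq : q ∈ A.P) :
    ((x * p) * star (x * p)) * ((y * q) * star (y * q)) =
      ((y * q) * star (y * q)) * ((x * p) * star (x * p)) := by
  obtain ⟨hp2, hps⟩ := A.P_isProj p hp
  obtain ⟨hq2, hqs⟩ := A.P_isProj q hq
  have hsa : ∀ r ∈ A.P, star r = r := fun r hr => (A.P_isProj r hr).2
  have sand : ∀ u r : X, star r = r → star (u * r * star u) = u * r * star u := by
    intro u r hr
    rw [star_mul, star_star, star_mul, hr, ← mul_assoc]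
  have move : ∀ z ∈ A.T1, ∀ r ∈ A.P, ∃ r' ∈ A.P, r * z = z * r' := by
    intro z hz r hr
    rcases Set.mem_insert_iff.mp hz with rfl | hz
    · exact ⟨r, hr, by rw [one_mul, mul_one]⟩
    · exact A.P_commute_T z hz r hr
  have ha : (x * p) * star (x * p) = x * p * star x := by
    rw [star_mul, hps, ← mul_assoc, mul_assoc x p p, hp2]
  have hb : (y * q) * star (y * q) = y * q * star y := by
    rw [star_mul, hqs, ← mul_assoc, mul_assoc y q q, hq2]
  have haa : star (x * p * star x) = x * p * star x := by
    simp [star_mul, hps, mul_assoc]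
  have hbb : star (y * q * star y) = y * q * star y := by
    simp [star_mul, hqs, mul_assoc]
  rw [ha, hb]
  suffices h : star (x * p * star x * (y * q * star y))
      = x * p * star x * (y * q * star y) by
    conv_rhs => rw [← haa, ← hbb, ← star_mul, h]
  rcases Set.mem_insert_iff.mp hx with rfl | hx
  · -- x = 1
    obtain ⟨p', hp', hpy⟩ := move y hy p hp
    have key : (1 : X) * p * star 1 * (y * q * star y)
        = y * (p' * q) * star y := by
      simp only [one_mul, star_one, mul_one, ← mul_assoc]
      rw [hpy]
    rw [key]
    exact sand y (p' * q)
      (by rw [star_mul, hsa p' hp', hsa q hq, A.P_comm q hq p' hp'])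
  rcases Set.mem_insert_iff.mp hy with rfl | hy
  · -- y = 1
    obtain ⟨q', hq', hqx⟩ := move x (Set.mem_insert_of_mem _ hx) q hq
    have h3 : star x * q = q' * star x := by
      calc star x * q = star (q * x) := by rw [star_mul, hsa q hq]
        _ = star (x * q') := by rw [hqx]
        _ = q' * star x := by rw [star_mul, hsa q' hq']
    have key : x * p * star x * ((1 : X) * q * star 1)
        = x * (p * q') * star x := by
      simp only [one_mul, star_one, mul_one]
      rw [mul_assoc (x * p), h3]
      simp only [← mul_assoc]
    rw [key]
    exact sand x (p * q')
      (by rw [star_mul, hsa p hp, hsa q' hq', A.P_comm q' hq' p hp])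
  · -- x, y ∈ T
    obtain ⟨qf, hqf, hexp⟩ := A.expansion x hx y hy
    have hM : x * p * star x * (y * q * star y)
        = ∑ ab ∈ (A.finitelyAligned x (Set.mem_insert_of_mem _ hx)
            y (Set.mem_insert_of_mem _ hy)).toFinset,
          (x * p) * (ab.1 * qf ab * star ab.2) * (q * star y) := by
      have h0 : x * p * star x * (y * q * star y)
          = (x * p) * (star x * y) * (q * star y) := by
        simp only [mul_assoc]
      rw [h0, hexp, Finset.mul_sum, Finset.sum_mul]
    rw [hM, star_sum]
    refine Finset.sum_congr rfl fun ab hab => ?_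
    have hm := (Set.Finite.mem_toFinset _).mp hab
    obtain ⟨hα, hβ, hne, hxy, hdeg⟩ := hm
    have hqfP : qf ab ∈ A.P := hqf ab ⟨hα, hβ, hne, hxy, hdeg⟩
    obtain ⟨p', hp', h1⟩ := move ab.1 hα p hp
    obtain ⟨q', hq', h2⟩ := move ab.2 hβ q hq
    have h3 : star ab.2 * q = q' * star ab.2 := by
      calc star ab.2 * q = star (q * ab.2) := by rw [star_mul, hsa q hq]
        _ = star (ab.2 * q') := by rw [h2]
        _ = q' * star ab.2 := by rw [star_mul, hsa q' hq']
    have key : (x * p) * (ab.1 * qf ab * star ab.2) * (q * star y)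
        = (x * ab.1) * (p' * qf ab * q') * star (x * ab.1) := by
      rw [hxy, star_mul]
      simp only [← mul_assoc]
      rw [mul_assoc x p ab.1, h1, mul_assoc _ (star ab.2) q, h3]
      simp only [← mul_assoc]
      rw [hxy]
    rw [key]
    refine sand (x * ab.1) (p' * qf ab * q') ?_
    rw [star_mul, star_mul, hsa p' hp', hsa q' hq', hsa (qf ab) hqfP]
    calc q' * (qf ab * p') = q' * (p' * qf ab) := by
          rw [A.P_comm (qf ab) hqfP p' hp']
      _ = q' * p' * qf ab := by rw [mul_assoc]
      _ = p' * q' * qf ab := by rw [A.P_comm q' hq' p' hp']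
      _ = p' * (qf ab * q') := by
          rw [mul_assoc, A.P_comm q' hq' (qf ab) hqfP]
      _ = p' * qf ab * q' := by rw [mul_assoc]
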